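/- There exists an instance of the optimal perimeter guarding problem on a circle in which every optimal cover entirely contains the unique largest gap. Concretely: on a circle with four segments S_1, S_2, S_3, S_4 of equal length s and four gaps, three of length a (evenly spaced, i.e., len(S_1) = len(S_2) = len(S_3) + len(G_3) + len(S_4)) and one gap G_3 of length 3a/2, with n = 3 robots, the optimal cover is {S_1, S_2, S_3 ∪ G_3 ∪ S_4}, which covers G_3, and any cover that skips G_3 has some arc strictly longer than len(S_1). -/

import Mathlib

/-- A closed arc on the circle of circumference `T`. -/
def carc (T : ℝ) (a b : ℝ) : Set (AddCircle T) :=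
  (fun x : ℝ => (x : AddCircle T)) '' Set.Icc a b

/-- An open arc on the circle of circumference `T`. -/
def oarc (T : ℝ) (a b : ℝ) : Set (AddCircle T) :=
  (fun x : ℝ => (x : AddCircle T)) '' Set.Ioo a b

lemma coe_add_zsmul (T t : ℝ) (k : ℤ) : ((t + k • T : ℝ) : AddCircle T) = (t : ℝ) := by
  have : ((k • T : ℝ) : AddCircle T) = 0 := by
    rw [QuotientAddGroup.eq_zero_iff]; exact AddSubgroup.zsmul_mem_zmultiples T k
  simp [this]

lemma carc_zsmul_shift (T u v : ℝ) (k : ℤ) :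
    carc T (u + k • T) (v + k • T) = carc T u v := by
  unfold carc
  ext z
  constructor
  · rintro ⟨t, ht, rfl⟩
    refine ⟨t - k • T, ⟨by linarith [ht.1], by linarith [ht.2]⟩, ?_⟩
    show ((t - k • T : ℝ) : AddCircle T) = ((t : ℝ) : AddCircle T)
    calc ((t - k • T : ℝ) : AddCircle T) = (((t - k • T) + k • T : ℝ) : AddCircle T) :=
          (coe_add_zsmul T _ k).symm
      _ = ((t : ℝ) : AddCircle T) := by norm_num
  · rintro ⟨t, ht, rfl⟩
    exact ⟨t + k • T, ⟨by linarith [ht.1], by linarith [ht.2]⟩, coe_add_zsmul T t k⟩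

lemma mem_carc_of_mem_Icc {T u v : ℝ} (t : ℝ) (ht : t ∈ Set.Icc u v) :
    (t : AddCircle T) ∈ carc T u v := ⟨t, ht, rfl⟩

lemma coe_sub_period (T t : ℝ) : ((t - T : ℝ) : AddCircle T) = (t : ℝ) := by
  have h := coe_add_zsmul T (t - T) 1
  rw [one_smul] at h
  rw [← h]
  norm_num

lemma fin3_cases (i a b c : Fin 3) (hab : a ≠ b) (hac : a ≠ c) (hbc : b ≠ c) :
    i = a ∨ i = b ∨ i = c := by revert i a b c; decide

theorem largest_gap_not_always_skipped (s a s3 s4 : ℝ)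
    (ha : 0 < a) (hs3 : 0 < s3) (hs4 : 0 < s4) (hsum : s3 + s4 = s - 3 * a / 2) :
    (∃ α γ : Fin 3 → ℝ, (∀ j, 0 ≤ γ j ∧ γ j ≤ s) ∧
      (carc (3*s + 3*a) 0 s ∪ carc (3*s + 3*a) (s + a) (2*s + a) ∪
        carc (3*s + 3*a) (2*s + 2*a) (2*s + 2*a + s3) ∪
        carc (3*s + 3*a) (3*s + 2*a - s4) (3*s + 2*a)) ⊆
          ⋃ j, carc (3*s + 3*a) (α j) (α j + γ j)) ∧
    (∀ α γ : Fin 3 → ℝ, (∀ j, 0 ≤ γ j) →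
      (carc (3*s + 3*a) 0 s ∪ carc (3*s + 3*a) (s + a) (2*s + a) ∪
        carc (3*s + 3*a) (2*s + 2*a) (2*s + 2*a + s3) ∪
        carc (3*s + 3*a) (3*s + 2*a - s4) (3*s + 2*a)) ⊆
          ⋃ j, carc (3*s + 3*a) (α j) (α j + γ j) →
      (∀ j, Disjoint (oarc (3*s + 3*a) (2*s + 2*a + s3) (2*s + 2*a + s3 + 3*a/2))
          (carc (3*s + 3*a) (α j) (α j + γ j))) →
      ∃ j, s < γ j) := by
  have hs : 0 < s := by linarith
  set T : ℝ := 3*s + 3*a with hTdef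
  have hT : 0 < T := by positivity
  constructor
  · -- Part (i): the explicit cover
    refine ⟨![0, s + a, 2*s + 2*a], ![s, s, s], ?_, ?_⟩
    · intro j; fin_cases j <;> simp <;> linarith
    · intro z hz
      rcases hz with ((hz | hz) | hz) | hz
      · exact Set.mem_iUnion.2 ⟨0, by simpa using hz⟩
      · refine Set.mem_iUnion.2 ⟨1, ?_⟩
        simp only [Matrix.cons_val_one, Matrix.head_cons, Matrix.cons_val_zero]
        have e : (s + a) + s = 2*s + a := by ring
        rwa [e]
      · refine Set.mem_iUnion.2 ⟨2, ?_⟩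
        rcases hz with ⟨t, ht, rfl⟩
        refine mem_carc_of_mem_Icc t ⟨by simpa using ht.1, ?_⟩
        have := ht.2; simp; linarith
      · refine Set.mem_iUnion.2 ⟨2, ?_⟩
        rcases hz with ⟨t, ht, rfl⟩
        refine mem_carc_of_mem_Icc t ⟨?_, ?_⟩
        · have := ht.1; simp; linarith
        · have := ht.2; simp; linarith
  · -- Part (ii)
    intro α γ hγ hcov hdisj
    by_contra hcon
    push_neg at hcon
    -- coordinates
    set P0 : ℝ := 3*s + 2*a - s4 with hP0def
    set P7 : ℝ := T + (2*s + 2*a + s3) with hP7def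
    have hP7P0 : P7 = P0 + (3*s + 3*a/2) := by linarith
    -- lifted arcs
    set c : Fin 3 → ℝ := fun j => toIcoMod hT P0 (α j) with hcdef
    have hc_mem : ∀ j, c j ∈ Set.Ico P0 (P0 + T) := fun j => toIcoMod_mem_Ico hT P0 (α j)
    have harc : ∀ j, carc T (α j) (α j + γ j) = carc T (c j) (c j + γ j) := by
      intro j
      obtain ⟨k, hk⟩ : ∃ k : ℤ, α j = c j + k • T :=
        ⟨toIcoDiv hT P0 (α j), (toIcoMod_add_toIcoDiv_zsmul hT P0 (α j)).symm⟩
      have h2 : α j + γ j = (c j + γ j) + k • T := by rw [hk]; ring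
      rw [h2, hk]
      exact carc_zsmul_shift T _ _ k
    -- the open gap, lifted by one period
    have hgap : ∀ j (t : ℝ), P7 < t → t < P0 + T → t ∉ Set.Icc (c j) (c j + γ j) := by
      intro j t h1 h2 ht
      have hmem : (t : AddCircle T) ∈ carc T (α j) (α j + γ j) := by
        rw [harc j]; exact mem_carc_of_mem_Icc t ht
      have hgap' : (t : AddCircle T) ∈ oarc T (2*s + 2*a + s3) (2*s + 2*a + s3 + 3*a/2) := by
        exact ⟨t - T, ⟨by linarith, by linarith⟩, coe_sub_period T t⟩
      exact Set.disjoint_left.1 (hdisj j) hgap' hmem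
    -- arcs lie in [P0, P7]
    have hub : ∀ j, c j + γ j ≤ P7 := by
      intro j
      have hcle : c j ≤ P7 := by
        by_contra h
        push_neg at h
        exact hgap j (c j) h (hc_mem j).2 ⟨le_refl _, by linarith [hγ j]⟩
      by_contra h
      push_neg at h
      set t : ℝ := (P7 + min (c j + γ j) (P0 + T)) / 2 with htdef
      have h1 : P7 < min (c j + γ j) (P0 + T) := lt_min h (by linarith)
      have h2 : P7 < t := by rw [htdef]; linarith
      refine hgap j t h2 ?_ ⟨by linarith [min_le_right (c j + γ j) (P0 + T)], ?_⟩
      · have := min_le_right (c j + γ j) (P0 + T); rw [htdef]; linarith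
      · have := min_le_left (c j + γ j) (P0 + T); rw [htdef]; linarith
    -- transfer of coverage to the line
    haveI : Fact (0 < T) := ⟨hT⟩
    have key : ∀ x : ℝ, P0 ≤ x → x ≤ P7 →
        (x : AddCircle T) ∈ (⋃ j, carc T (α j) (α j + γ j)) →
        ∃ j, c j ≤ x ∧ x ≤ c j + γ j := by
      intro x hx1 hx2 hx
      rcases Set.mem_iUnion.1 hx with ⟨j, hj⟩
      rw [harc j] at hj
      rcases hj with ⟨t, ht, hteq⟩
      have hxt : t = x := by
        rw [AddCircle.coe_eq_coe_iff_of_mem_Ico (a := P0)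
          ⟨le_trans (hc_mem j).1 ht.1, lt_of_le_of_lt (le_trans ht.2 (hub j))
            (by linarith)⟩
          ⟨hx1, lt_of_le_of_lt hx2 (by linarith)⟩] at hteq
        exact hteq
      exact ⟨j, by rw [← hxt]; exact ht.1, by rw [← hxt]; exact ht.2⟩
    -- coverage of lifted segment points
    have covS1 : ∀ x : ℝ, T ≤ x → x ≤ T + s → ∃ j, c j ≤ x ∧ x ≤ c j + γ j := by
      intro x h1 h2
      refine key x (by linarith) (by linarith) ?_
      refine hcov (Or.inl (Or.inl (Or.inl ⟨x - T, ⟨by linarith, by linarith⟩, coe_sub_period T x⟩)))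
    have covS2 : ∀ x : ℝ, T + (s + a) ≤ x → x ≤ T + (2*s + a) → ∃ j, c j ≤ x ∧ x ≤ c j + γ j := by
      intro x h1 h2
      refine key x (by linarith) (by linarith) ?_
      refine hcov (Or.inl (Or.inl (Or.inr ⟨x - T, ⟨by linarith, by linarith⟩, coe_sub_period T x⟩)))
    have covS3r : ∃ j, c j ≤ P7 ∧ P7 ≤ c j + γ j := by
      refine key P7 (by linarith) (le_refl _) ?_
      exact hcov (Or.inl (Or.inr ⟨P7 - T, ⟨by linarith, by linarith⟩, coe_sub_period T P7⟩))
    have covS4l : ∃ j, c j ≤ P0 ∧ P0 ≤ c j + γ j := by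
      refine key P0 (le_refl _) (by linarith) ?_
      exact hcov (Or.inr ⟨P0, ⟨le_refl _, by linarith⟩, rfl⟩)
    -- name the special indices
    obtain ⟨j0, hj0l, hj0r⟩ := covS4l
    obtain ⟨j3, hj3l, hj3r⟩ := covS1 (T + s) (by linarith) (le_refl _)
    obtain ⟨j7, hj7l, hj7r⟩ := covS3r
    obtain ⟨j4, hj4l, hj4r⟩ := covS2 (T + (s + a)) (le_refl _) (by linarith)
    have hcj0 : c j0 = P0 := le_antisymm hj0l (hc_mem j0).1
    -- distances
    have d03 : (T + s) - P0 = s + a + s4 := by linarith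
    have d07 : P7 - P0 = 3*s + 3*a/2 := by linarith
    have d37 : P7 - (T + s) = s + 2*a + s3 := by linarith
    have d04 : (T + (s + a)) - P0 = s + 2*a + s4 := by linarith
    have d47 : P7 - (T + (s + a)) = s + a + s3 := by linarith
    have h03 : j0 ≠ j3 := by
      intro h; rw [h] at hj0l
      have : s < γ j3 := by linarith [hj3r, hj0l]
      exact absurd this (not_lt.2 (hcon j3))
    have h07 : j0 ≠ j7 := by
      intro h; rw [h] at hj0l
      have : s < γ j7 := by linarith [hj7r, hj0l]
      exact absurd this (not_lt.2 (hcon j7))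
    have h37 : j3 ≠ j7 := by
      intro h; rw [h] at hj3l
      have : s < γ j7 := by linarith [hj7r, hj3l]
      exact absurd this (not_lt.2 (hcon j7))
    have hj43 : j4 = j3 := by
      rcases fin3_cases j4 j0 j3 j7 h03 h07 h37 with h | h | h
      · exfalso; rw [h, hcj0] at hj4l
        have : s < γ j0 := by rw [h] at hj4r; linarith [hj4r]
        exact absurd this (not_lt.2 (hcon j0))
      · exact h
      · exfalso; rw [h] at hj4l
        have : s < γ j7 := by rw [h] at hj4r; linarith [hj7r, hj4l]
        exact absurd this (not_lt.2 (hcon j7))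
    rw [hj43] at hj4l hj4r
    -- c j7 is far right
    have hcj7 : P7 - s ≤ c j7 := by linarith [hcon j7, hj7r]
    -- Step: c j3 ≤ P0 + s
    have hcj3 : c j3 ≤ P0 + s := by
      by_contra h
      push_neg at h
      set y : ℝ := (P0 + s + min (c j3) (T + s)) / 2 with hydef
      have hm : P0 + s < min (c j3) (T + s) := lt_min h (by linarith)
      have hy1 : P0 + s < y := by rw [hydef]; linarith
      have hy2 : y < c j3 := by
        have := min_le_left (c j3) (T + s); rw [hydef]; linarith
      have hy3 : y ≤ T + s := by
        have := min_le_right (c j3) (T + s); rw [hydef]; linarith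
      have hy4 : T ≤ y := by linarith
      obtain ⟨j, hjl, hjr⟩ := covS1 y hy4 hy3
      rcases fin3_cases j j0 j3 j7 h03 h07 h37 with hj | hj | hj
      · rw [hj, hcj0] at hjr; linarith [hcon j0, hjr, hj.symm ▸ hjr]
      · rw [hj] at hjl; linarith
      · rw [hj] at hjl
        have : y < P7 - s := by linarith [d37]
        linarith
    -- Final contradiction in S2
    have hrB : c j3 + γ j3 ≤ P0 + 2*s := by linarith [hcon j3]
    set x : ℝ := (c j3 + γ j3 + min (c j7) (T + (2*s + a))) / 2 with hxdef
    have hm : c j3 + γ j3 < min (c j7) (T + (2*s + a)) := by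
      refine lt_min ?_ ?_
      · linarith
      · linarith
    have hx1 : c j3 + γ j3 < x := by rw [hxdef]; linarith
    have hx2 : x < c j7 := by
      have := min_le_left (c j7) (T + (2*s + a)); rw [hxdef]; linarith
    have hx3 : x ≤ T + (2*s + a) := by
      have := min_le_right (c j7) (T + (2*s + a)); rw [hxdef]; linarith
    have hx4 : T + (s + a) ≤ x := by linarith
    obtain ⟨j, hjl, hjr⟩ := covS2 x hx4 hx3
    rcases fin3_cases j j0 j3 j7 h03 h07 h37 with hj | hj | hj
    · rw [hj, hcj0] at hjr
      have : x ≤ P0 + s := by linarith [hcon j0]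
      linarith [d04]
    · rw [hj] at hjr; linarith
    · rw [hj] at hjl; linarith
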